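/- For real x and y and real t with 2 ≤ t ≤ 3, one has |x+y|^t − |x|^t ≤ t·|x|^{t−2}·x·y + (t(t−1)/2)·|x|^{t−2}·y² + |y|^t. -/

import Mathlib

open Real Set intervalIntegral

lemma my_rpow_add_le {a b p : ℝ} (ha : 0 ≤ a) (hb : 0 ≤ b) (hp : 0 ≤ p) (hp1 : p ≤ 1) :
    (a + b) ^ p ≤ a ^ p + b ^ p := by
  have h := NNReal.rpow_add_le_add_rpow a.toNNReal b.toNNReal hp hp1
  have h2 := NNReal.coe_le_coe.2 h
  push_cast at h2
  rwa [Real.coe_toNNReal a ha, Real.coe_toNNReal b hb] at h2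

lemma my_abs_rpow_continuous {q : ℝ} (hq : 0 ≤ q) : Continuous (fun u : ℝ => |u| ^ q) := by
  have : Continuous (fun w : ℝ => w ^ q) := by
    rw [continuous_iff_continuousAt]
    intro v
    exact Real.continuousAt_rpow_const v q (Or.inr hq)
  exact this.comp continuous_abs

lemma my_sq_rpow_eq (u c : ℝ) : (u ^ 2) ^ c = |u| ^ (2 * c) := by
  rw [← sq_abs, ← Real.rpow_natCast |u| 2, ← Real.rpow_mul (abs_nonneg u)]
  norm_num

lemma my_rpow_cont {q : ℝ} (hq : 0 ≤ q) : Continuous (fun w : ℝ => w ^ q) := by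
  rw [continuous_iff_continuousAt]
  intro w
  rcases eq_or_ne w 0 with rfl | hw
  · exact Real.continuousAt_rpow_const 0 q (Or.inr hq)
  · exact Real.continuousAt_rpow_const w q (Or.inl hw)

-- derivative of g u = |u|^(t-2) * u
lemma my_hasDerivAt_g {t : ℝ} (ht2 : 2 < t) (v : ℝ) :
    HasDerivAt (fun u : ℝ => |u| ^ (t - 2) * u) ((t - 1) * |v| ^ (t - 2)) v := by
  have h0 : |(0:ℝ)| ^ (t - 2) = 0 := by
    rw [abs_zero, Real.zero_rpow (by linarith)]
  rcases eq_or_ne v 0 with rfl | hv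
  · rw [hasDerivAt_iff_tendsto_slope]
    have hval : (t - 1) * |(0:ℝ)| ^ (t - 2) = 0 := by rw [h0]; ring
    rw [hval]
    have hcont : ContinuousAt (fun u : ℝ => |u| ^ (t - 2)) 0 :=
      (my_abs_rpow_continuous (by linarith)).continuousAt
    have hlim := hcont.tendsto.mono_left (nhdsWithin_le_nhds (s := {(0:ℝ)}ᶜ))
    rw [h0] at hlim
    apply hlim.congr'
    filter_upwards [self_mem_nhdsWithin] with u hu
    have hu' : u ≠ 0 := hu
    simp only [slope, h0, zero_mul, Pi.sub_apply, vsub_eq_sub, sub_zero]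
    rw [smul_eq_mul]; field_simp
  · have h1 : HasDerivAt (fun u : ℝ => u ^ 2) (2 * v) v := by
      simpa using (hasDerivAt_pow 2 v)
    have h3 : HasDerivAt (fun u : ℝ => (u ^ 2) ^ ((t - 2) / 2))
        (2 * v * ((t - 2) / 2) * (v ^ 2) ^ ((t - 2) / 2 - 1)) v :=
      h1.rpow_const (Or.inl (pow_ne_zero 2 hv))
    have h4 : HasDerivAt (fun u : ℝ => (u ^ 2) ^ ((t - 2) / 2) * id u) _ v := h3.mul (hasDerivAt_id v)
    have hfun : (fun u : ℝ => (u ^ 2) ^ ((t - 2) / 2) * id u)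
        = fun u : ℝ => |u| ^ (t - 2) * u := by
      funext u
      simp only [id, my_sq_rpow_eq]
      rw [show 2 * ((t - 2) / 2) = t - 2 by ring]
    rw [hfun] at h4
    convert h4 using 1
    simp only [id, my_sq_rpow_eq]
    have habs : (0:ℝ) < |v| := abs_pos.2 hv
    have h5 : |v| ^ (2 * ((t - 2) / 2 - 1)) * v ^ 2 = |v| ^ (t - 2) := by
      rw [← sq_abs, ← Real.rpow_natCast |v| 2, ← Real.rpow_add habs]
      congr 1
      ring
    have h6 : 2 * ((t - 2) / 2) = t - 2 := by ring
    rw [h6]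
    nlinarith [h5]

lemma my_g_mono_claim {t : ℝ} (ht2 : 2 < t) (ht3 : t ≤ 3) {a b : ℝ} (hab : a ≤ b) :
    |a| ^ (t - 2) * a ≤ |b| ^ (t - 2) * b ∧
    |b| ^ (t - 2) * b - |a| ^ (t - 2) * a ≤
      (t - 1) * |a| ^ (t - 2) * (b - a) + (b - a) ^ (t - 1) := by
  have ht2' : (0:ℝ) ≤ t - 2 := by linarith
  have hcont1 : Continuous (fun v : ℝ => (t - 1) * |v| ^ (t - 2)) :=
    continuous_const.mul (my_abs_rpow_continuous ht2')
  have hrpow_cont : Continuous (fun w : ℝ => w ^ (t - 2)) := my_rpow_cont ht2'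
  have hcont2 : Continuous (fun v : ℝ => (t - 1) * (|a| ^ (t - 2) + (v - a) ^ (t - 2))) :=
    continuous_const.mul (continuous_const.add (hrpow_cont.comp (continuous_id.sub continuous_const)))
  have hFTC1 : ∫ v in a..b, (t - 1) * |v| ^ (t - 2)
      = |b| ^ (t - 2) * b - |a| ^ (t - 2) * a :=
    intervalIntegral.integral_eq_sub_of_hasDerivAt
      (fun v _ => my_hasDerivAt_g ht2 v) (hcont1.intervalIntegrable a b)
  have hFTC2 : ∫ v in a..b, (t - 1) * (v - a) ^ (t - 2) = (b - a) ^ (t - 1) := by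
    have hder : ∀ v ∈ Set.uIcc a b, HasDerivAt (fun v : ℝ => (v - a) ^ (t - 1))
        ((t - 1) * (v - a) ^ (t - 2)) v := by
      intro v _
      have h := ((hasDerivAt_id v).sub_const a).rpow_const (p := t - 1) (Or.inr (by linarith))
      simpa [show t - 1 - 1 = t - 2 by ring] using h
    have hint : IntervalIntegrable (fun v : ℝ => (t - 1) * (v - a) ^ (t - 2))
        MeasureTheory.volume a b :=
      (continuous_const.mul (hrpow_cont.comp (continuous_id.sub continuous_const))).intervalIntegrable a b
    rw [intervalIntegral.integral_eq_sub_of_hasDerivAt hder hint]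
    rw [sub_self, Real.zero_rpow (by linarith), sub_zero]
  constructor
  · have hnn : 0 ≤ ∫ v in a..b, (t - 1) * |v| ^ (t - 2) := by
      apply intervalIntegral.integral_nonneg hab
      intro v _
      exact mul_nonneg (by linarith) (Real.rpow_nonneg (abs_nonneg v) _)
    linarith [hFTC1 ▸ hnn]
  · have hmono : (∫ v in a..b, (t - 1) * |v| ^ (t - 2))
        ≤ ∫ v in a..b, (t - 1) * (|a| ^ (t - 2) + (v - a) ^ (t - 2)) := by
      apply intervalIntegral.integral_mono_on hab (hcont1.intervalIntegrable a b)
        (hcont2.intervalIntegrable a b)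
      intro v hv
      have h1 : |v| ≤ |a| + (v - a) := by
        have := abs_sub_abs_le_abs_sub v a
        have : |v - a| = v - a := abs_of_nonneg (by linarith [hv.1])
        calc |v| = |a + (v - a)| := by ring_nf
        _ ≤ |a| + |v - a| := abs_add_le _ _
        _ = |a| + (v - a) := by rw [this]
      have h2 : |v| ^ (t - 2) ≤ (|a| + (v - a)) ^ (t - 2) :=
        Real.rpow_le_rpow (abs_nonneg v) h1 ht2'
      have h3 : (|a| + (v - a)) ^ (t - 2) ≤ |a| ^ (t - 2) + (v - a) ^ (t - 2) :=
        my_rpow_add_le (abs_nonneg a) (by linarith [hv.1]) ht2' (by linarith)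
      have ht1 : (0:ℝ) ≤ t - 1 := by linarith
      nlinarith
    have hsplit : ∫ v in a..b, (t - 1) * (|a| ^ (t - 2) + (v - a) ^ (t - 2))
        = (t - 1) * |a| ^ (t - 2) * (b - a) + (b - a) ^ (t - 1) := by
      have : (fun v : ℝ => (t - 1) * (|a| ^ (t - 2) + (v - a) ^ (t - 2)))
          = fun v : ℝ => (t - 1) * |a| ^ (t - 2) + (t - 1) * (v - a) ^ (t - 2) := by
        funext v; ring
      have hcont3 : Continuous (fun v : ℝ => (t - 1) * (v - a) ^ (t - 2)) :=
        continuous_const.mul (hrpow_cont.comp (continuous_id.sub continuous_const))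
      have hint2 : IntervalIntegrable (fun v : ℝ => (t - 1) * (v - a) ^ (t - 2))
          MeasureTheory.volume a b := hcont3.intervalIntegrable a b
      rw [this, intervalIntegral.integral_add intervalIntegrable_const hint2,
        intervalIntegral.integral_const, hFTC2, smul_eq_mul]
      ring
    linarith [hFTC1 ▸ hsplit ▸ hmono]

lemma my_g_lip {t : ℝ} (ht2 : 2 < t) (ht3 : t ≤ 3) (a b : ℝ) :
    |(|b| ^ (t - 2) * b - |a| ^ (t - 2) * a)| ≤
      (t - 1) * |a| ^ (t - 2) * |b - a| + |b - a| ^ (t - 1) := by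
  rcases le_total a b with hab | hba
  · obtain ⟨hm, hc⟩ := my_g_mono_claim ht2 ht3 hab
    rw [abs_of_nonneg (sub_nonneg.2 hm), abs_of_nonneg (sub_nonneg.2 hab)]
    exact hc
  · obtain ⟨hm, hc⟩ := my_g_mono_claim ht2 ht3 (neg_le_neg hba)
    rw [abs_neg, abs_neg, mul_neg, mul_neg] at hm hc
    rw [abs_of_nonpos (show |b| ^ (t - 2) * b - |a| ^ (t - 2) * a ≤ 0 by linarith),
      abs_of_nonpos (show b - a ≤ 0 by linarith)]
    rw [show (-b - -a : ℝ) = -(b - a) by ring] at hc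
    linarith

theorem scalar_lemma1 (t : ℝ) (ht : t ∈ Set.Icc (2 : ℝ) 3) (x y : ℝ) :
    |x + y| ^ t - |x| ^ t ≤
      t * |x| ^ (t - 2) * x * y + t * (t - 1) / 2 * |x| ^ (t - 2) * y ^ 2 + |y| ^ t := by
  obtain ⟨ht2, ht3⟩ := ht
  rcases eq_or_lt_of_le ht2 with heq | ht2'
  · -- t = 2
    have e : ∀ z : ℝ, |z| ^ t = z ^ 2 := fun z => by
      rw [← heq, show ((2:ℝ)) = ((2:ℕ):ℝ) by norm_num, Real.rpow_natCast, sq_abs]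
    rw [e, e, e, ← heq]
    rw [show (2:ℝ) - 2 = 0 by norm_num, Real.rpow_zero]
    nlinarith [sq_nonneg y]
  · rcases eq_or_ne y 0 with rfl | hy
    · simp
      positivity
    have ht0 : (0:ℝ) < t := by linarith
    have htm2 : (0:ℝ) ≤ t - 2 := by linarith
    have hgcont : Continuous (fun u : ℝ => |u| ^ (t - 2) * u) :=
      (my_abs_rpow_continuous htm2).mul continuous_id
    have haff : Continuous (fun s : ℝ => x + s * y) :=
      continuous_const.add (continuous_id.mul continuous_const)
    -- derivative of h s = |x + s y|^t
    have hDh : ∀ s : ℝ, HasDerivAt (fun s : ℝ => |x + s * y| ^ t)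
        (t * (|x + s * y| ^ (t - 2) * (x + s * y)) * y) s := by
      intro s
      have h1 : HasDerivAt (fun s : ℝ => x + s * y) y s := by
        simpa using ((hasDerivAt_id s).mul_const y).const_add x
      have h2 := hasDerivAt_abs_rpow (x + s * y) (show (1:ℝ) < t by linarith)
      have h3 := h2.comp s h1
      rw [show t * (|x + s * y| ^ (t - 2) * (x + s * y)) * y = t * |x + s * y| ^ (t - 2) * (x + s * y) * y by ring]
      exact h3
    have hcont : Continuous (fun s : ℝ => t * (|x + s * y| ^ (t - 2) * (x + s * y)) * y) :=
      (continuous_const.mul (hgcont.comp haff)).mul continuous_const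
    have hFTC : ∫ s in (0:ℝ)..1, t * (|x + s * y| ^ (t - 2) * (x + s * y)) * y
        = |x + y| ^ t - |x| ^ t := by
      rw [intervalIntegral.integral_eq_sub_of_hasDerivAt (fun s _ => hDh s)
        (hcont.intervalIntegrable 0 1)]
      norm_num
    -- pointwise bound on [0,1]
    set C0 : ℝ := t * (|x| ^ (t - 2) * x) * y with hC0
    set C1 : ℝ := t * (t - 1) * |x| ^ (t - 2) * y ^ 2 with hC1
    set C2 : ℝ := t * |y| ^ t with hC2
    have hbound : ∀ s ∈ Set.Icc (0:ℝ) 1,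
        t * (|x + s * y| ^ (t - 2) * (x + s * y)) * y ≤ C0 + C1 * s + C2 * s ^ (t - 1) := by
      intro s hs
      have hs0 : (0:ℝ) ≤ s := hs.1
      have hlip := my_g_lip ht2' ht3 x (x + s * y)
      rw [show x + s * y - x = s * y by ring] at hlip
      have habs_sy : |s * y| = s * |y| := by rw [abs_mul, abs_of_nonneg hs0]
      rw [habs_sy] at hlip
      have hsy_pow : (s * |y|) ^ (t - 1) = s ^ (t - 1) * |y| ^ (t - 1) :=
        Real.mul_rpow hs0 (abs_nonneg y)
      rw [hsy_pow] at hlip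
      -- y * (A - B) ≤ |y| * |A - B|
      set A : ℝ := |x + s * y| ^ (t - 2) * (x + s * y)
      set B : ℝ := |x| ^ (t - 2) * x
      have h1 : y * (A - B) ≤ |y| * |A - B| := by
        calc y * (A - B) ≤ |y * (A - B)| := le_abs_self _
        _ = |y| * |A - B| := abs_mul _ _
      have h2 : |y| * |A - B| ≤ |y| * ((t - 1) * |x| ^ (t - 2) * (s * |y|)
          + s ^ (t - 1) * |y| ^ (t - 1)) :=
        mul_le_mul_of_nonneg_left hlip (abs_nonneg y)
      have hyy : |y| * |y| = y ^ 2 := by rw [← abs_mul, ← sq, abs_of_nonneg (sq_nonneg y)]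
      have hyt : |y| * |y| ^ (t - 1) = |y| ^ t := by
        nth_rewrite 1 [← Real.rpow_one |y|]
        rw [← Real.rpow_add (abs_pos.2 hy), show (1 : ℝ) + (t - 1) = t by ring]
      have key : y * A ≤ y * B + |y| * ((t - 1) * |x| ^ (t - 2) * (s * |y|)
          + s ^ (t - 1) * |y| ^ (t - 1)) := by nlinarith [h1, h2]
      calc t * A * y = t * (y * A) := by ring
      _ ≤ t * (y * B + |y| * ((t - 1) * |x| ^ (t - 2) * (s * |y|)
          + s ^ (t - 1) * |y| ^ (t - 1))) := by
        apply mul_le_mul_of_nonneg_left key (le_of_lt ht0)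
      _ = C0 + C1 * s + C2 * s ^ (t - 1) := by
        rw [hC0, hC1, hC2]
        rw [show t * (y * B + |y| * ((t - 1) * |x| ^ (t - 2) * (s * |y|)
          + s ^ (t - 1) * |y| ^ (t - 1)))
          = t * B * y + t * (t - 1) * |x| ^ (t - 2) * (|y| * |y|) * s
          + t * (|y| * |y| ^ (t - 1)) * s ^ (t - 1) by ring, hyy, hyt]
    -- integral of the majorant
    have hmajcont : Continuous (fun s : ℝ => C0 + C1 * s + C2 * s ^ (t - 1)) := by
      apply Continuous.add
      apply Continuous.add continuous_const
      exact continuous_const.mul continuous_id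
      exact continuous_const.mul (my_rpow_cont (by linarith))
    have hintineq : (∫ s in (0:ℝ)..1, t * (|x + s * y| ^ (t - 2) * (x + s * y)) * y)
        ≤ ∫ s in (0:ℝ)..1, C0 + C1 * s + C2 * s ^ (t - 1) :=
      intervalIntegral.integral_mono_on (by norm_num) (hcont.intervalIntegrable 0 1)
        (hmajcont.intervalIntegrable 0 1) hbound
    have hmajval : (∫ s in (0:ℝ)..1, C0 + C1 * s + C2 * s ^ (t - 1))
        = C0 + C1 / 2 + C2 / t := by
      have i1 : IntervalIntegrable (fun s : ℝ => C0) MeasureTheory.volume 0 1 :=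
        intervalIntegrable_const
      have i2 : IntervalIntegrable (fun s : ℝ => C1 * s) MeasureTheory.volume 0 1 :=
        (continuous_const.mul continuous_id).intervalIntegrable 0 1
      have i3 : IntervalIntegrable (fun s : ℝ => C2 * s ^ (t - 1)) MeasureTheory.volume 0 1 :=
        (continuous_const.mul (my_rpow_cont (by linarith))).intervalIntegrable 0 1
      rw [intervalIntegral.integral_add (i1.add i2) i3, intervalIntegral.integral_add i1 i2,
        intervalIntegral.integral_const, intervalIntegral.integral_const_mul,
        intervalIntegral.integral_const_mul, integral_id,
        integral_rpow (Or.inl (by linarith : (-1:ℝ) < t - 1))]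
      rw [show t - 1 + 1 = t by ring, Real.one_rpow, Real.zero_rpow (ne_of_gt ht0)]
      rw [smul_eq_mul]
      field_simp
      ring
    have hfin : |x + y| ^ t - |x| ^ t ≤ C0 + C1 / 2 + C2 / t := by
      rw [← hFTC, ← hmajval]; exact hintineq
    have hC2t : C2 / t = |y| ^ t := by rw [hC2]; field_simp
    rw [hC0, hC1, hC2t] at hfin
    calc |x + y| ^ t - |x| ^ t
        ≤ t * (|x| ^ (t - 2) * x) * y + t * (t - 1) * |x| ^ (t - 2) * y ^ 2 / 2 + |y| ^ t := hfin
    _ = t * |x| ^ (t - 2) * x * y + t * (t - 1) / 2 * |x| ^ (t - 2) * y ^ 2 + |y| ^ t := by ring
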